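/- Consider a deep feedforward network φ(x,θ) = W_L σ_{L-1}(⋯ σ_1(W_1 x + b_1) ⋯ + b_{L-1}) + b_L with depth L ≥ 2, output dimension 1, activations σ_l ∈ C¹ with σ_l(0) = 0 and σ_l' ≥ c_l > 0 acting componentwise. Fix α̃ > 0, initialization θ_0 with b_l = 0 for all l, W_1 = 0, all entries of W_2,…,W_{L-1} at least R > 0, and all entries of W_L at least A > R/2. If θ' is such that |θ' − θ_0| ≤ R/2, all entries of (W_1' x + b_1') are ≥ α̃|θ'−θ_0| for the given input x, and b_2',…,b_L' ≥ 0 componentwise, then φ(x, θ') ≥ (A − R/2)(R/2)^{L-2} c_{L-1}⋯c_1 d_{L-1}⋯d_1 α̃ |θ' − θ_0|, where d_l is the width of layer l. -/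

import Mathlib

/-- Hidden-layer forward pass of a feedforward network: `hiddenLayer dim σ W b x l`
is the output of the `l`-th hidden layer (with `hiddenLayer … 0 = x`),
where layer `l+1` applies the activation `σ l` componentwise after the affine map
given by the weight matrix `W l` and bias `b l`. -/
noncomputable def hiddenLayer (dim : ℕ → ℕ) (σ : ℕ → ℝ → ℝ)
    (W : ∀ l : ℕ, Matrix (Fin (dim (l + 1))) (Fin (dim l)) ℝ)
    (b : ∀ l : ℕ, Fin (dim (l + 1)) → ℝ)
    (x : Fin (dim 0) → ℝ) : ∀ l : ℕ, Fin (dim l) → ℝ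
  | 0 => x
  | l + 1 => fun j => σ l ((W l).mulVec (hiddenLayer dim σ W b x l) j + b l j)

theorem stmt17 (L : ℕ) (hL : 2 ≤ L)
    (dim : ℕ → ℕ) (hdim : ∀ l, 0 < dim l) (hdL : dim L = 1)
    (σ : ℕ → ℝ → ℝ) (c : ℕ → ℝ)
    (hσdiff : ∀ l, Differentiable ℝ (σ l)) (hσ0 : ∀ l, σ l 0 = 0)
    (hc : ∀ l, 0 < c l) (hderiv : ∀ l t, c l ≤ deriv (σ l) t)
    (R A αt : ℝ) (hR : 0 < R) (hA : R / 2 < A) (hαt : 0 < αt)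
    -- the parameter θ' = (W, b) and the initialization θ₀ = (W0, 0)
    (W W0 : ∀ l : ℕ, Matrix (Fin (dim (l + 1))) (Fin (dim l)) ℝ)
    (b : ∀ l : ℕ, Fin (dim (l + 1)) → ℝ)
    (hW0first : W0 0 = 0)
    (hW0mid : ∀ l : ℕ, 1 ≤ l → l ≤ L - 2 → ∀ i j, R ≤ W0 l i j)
    (hW0last : ∀ i j, A ≤ W0 (L - 1) i j)
    (x : Fin (dim 0) → ℝ) :
    -- the Euclidean distance |θ' − θ₀|
    let t : ℝ := Real.sqrt (∑ l ∈ Finset.range L,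
      ((∑ i, ∑ j, (W l i j - W0 l i j) ^ 2) + ∑ j, (b l j) ^ 2))
    t ≤ R / 2 →
    (∀ j, αt * t ≤ (W 0).mulVec x j + b 0 j) →
    (∀ l : ℕ, 1 ≤ l → ∀ j, 0 ≤ b l j) →
    ∀ j : Fin (dim (L - 1 + 1)),
      (A - R / 2) * (R / 2) ^ (L - 2) * (∏ l ∈ Finset.range (L - 1), c l) *
          (∏ l ∈ Finset.Icc 1 (L - 1), (dim l : ℝ)) * αt * t ≤
        (W (L - 1)).mulVec (hiddenLayer dim σ W b x (L - 1)) j + b (L - 1) j := by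

  intro t ht hfirst hb j
  have ht0 : 0 ≤ t := Real.sqrt_nonneg _
  have hαtt : 0 ≤ αt * t := mul_nonneg hαt.le ht0
  -- σ bound: c l * s ≤ σ l s for s ≥ 0
  have hσ : ∀ l s, 0 ≤ s → c l * s ≤ σ l s := by
    intro l s hs
    have h := mul_sub_le_image_sub_of_le_deriv (hσdiff l) (hderiv l) hs
    simpa [hσ0 l] using h
  -- entrywise weight bounds
  have hWt : ∀ l, l < L → ∀ i j, W0 l i j - t ≤ W l i j := by
    intro l hl i j'
    have hnn : ∀ l' ∈ Finset.range L,
        0 ≤ (∑ i, ∑ j, (W l' i j - W0 l' i j) ^ 2) + ∑ j, (b l' j) ^ 2 :=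
      fun l' _ => add_nonneg (Finset.sum_nonneg fun _ _ => Finset.sum_nonneg fun _ _ => sq_nonneg _)
        (Finset.sum_nonneg fun _ _ => sq_nonneg _)
    have h1 : (W l i j' - W0 l i j') ^ 2 ≤ ∑ i', ∑ j'', (W l i' j'' - W0 l i' j'') ^ 2 := by
      calc (W l i j' - W0 l i j') ^ 2 ≤ ∑ j'', (W l i j'' - W0 l i j'') ^ 2 :=
            Finset.single_le_sum (f := fun j'' => (W l i j'' - W0 l i j'') ^ 2)
              (fun _ _ => sq_nonneg _) (Finset.mem_univ j')
        _ ≤ _ := Finset.single_le_sum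
            (f := fun i' => ∑ j'', (W l i' j'' - W0 l i' j'') ^ 2)
            (fun _ _ => Finset.sum_nonneg fun _ _ => sq_nonneg _) (Finset.mem_univ i)
    have h2 : ((∑ i', ∑ j'', (W l i' j'' - W0 l i' j'') ^ 2) + ∑ j'', (b l j'') ^ 2)
        ≤ ∑ l' ∈ Finset.range L,
          ((∑ i, ∑ j, (W l' i j - W0 l' i j) ^ 2) + ∑ j, (b l' j) ^ 2) :=
      Finset.single_le_sum hnn (Finset.mem_range.mpr hl)
    have hbs : 0 ≤ ∑ j'', (b l j'') ^ 2 := Finset.sum_nonneg fun _ _ => sq_nonneg _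
    have hsq : t ^ 2 = ∑ l' ∈ Finset.range L,
        ((∑ i, ∑ j, (W l' i j - W0 l' i j) ^ 2) + ∑ j, (b l' j) ^ 2) :=
      Real.sq_sqrt (Finset.sum_nonneg hnn)
    nlinarith [sq_nonneg (W l i j' - W0 l i j' + t)]
  -- inductive lower bound on hidden layers
  have key : ∀ l, 1 ≤ l → l ≤ L - 1 → ∀ i : Fin (dim l),
      (∏ k ∈ Finset.range l, c k) * (R / 2) ^ (l - 1) *
        (∏ k ∈ Finset.Icc 1 (l - 1), (dim k : ℝ)) * (αt * t) ≤ hiddenLayer dim σ W b x l i := by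
    intro l
    induction l with
    | zero => omega
    | succ l ih =>
      intro _ hl i
      rcases Nat.eq_zero_or_pos l with h0 | hl1
      · subst h0
        have hLHS : (∏ k ∈ Finset.range (0 + 1), c k) * (R / 2) ^ (0 + 1 - 1) *
            (∏ k ∈ Finset.Icc 1 (0 + 1 - 1), (dim k : ℝ)) * (αt * t) = c 0 * (αt * t) := by
          norm_num
        rw [hLHS]
        show c 0 * (αt * t) ≤ σ 0 ((W 0).mulVec x i + b 0 i)
        calc c 0 * (αt * t) ≤ c 0 * ((W 0).mulVec x i + b 0 i) :=
              mul_le_mul_of_nonneg_left (hfirst i) (hc 0).le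
          _ ≤ _ := hσ 0 _ (le_trans hαtt (hfirst i))
      · -- step : 1 ≤ l ≤ L - 2
        obtain ⟨m, rfl⟩ : ∃ m, l = m + 1 := ⟨l - 1, by omega⟩
        set B := (∏ k ∈ Finset.range (m + 1), c k) * (R / 2) ^ (m + 1 - 1) *
          (∏ k ∈ Finset.Icc 1 (m + 1 - 1), (dim k : ℝ)) * (αt * t) with hBdef
        have hB0 : 0 ≤ B := by
          refine mul_nonneg (mul_nonneg (mul_nonneg ?_ ?_) ?_) hαtt
          · exact Finset.prod_nonneg fun k _ => (hc k).le
          · positivity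
          · exact Finset.prod_nonneg fun k _ => by positivity
        have ihB := ih (by omega) (by omega)
        have hWlow : ∀ i' j', R / 2 ≤ W (m + 1) i' j' := by
          intro i' j'
          have := hWt (m + 1) (by omega) i' j'
          have := hW0mid (m + 1) (by omega) (by omega) i' j'
          linarith
        have hsum : (dim (m + 1) : ℝ) * (R / 2 * B) ≤
            (W (m + 1)).mulVec (hiddenLayer dim σ W b x (m + 1)) i := by
          rw [Matrix.mulVec, dotProduct]
          calc (dim (m + 1) : ℝ) * (R / 2 * B)
              = ∑ _k : Fin (dim (m + 1)), R / 2 * B := by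
                rw [Finset.sum_const, Finset.card_univ, Fintype.card_fin, nsmul_eq_mul]
            _ ≤ ∑ k, W (m + 1) i k * hiddenLayer dim σ W b x (m + 1) k :=
                Finset.sum_le_sum fun k _ =>
                  mul_le_mul (hWlow i k) (ihB k) hB0 (le_trans (by linarith) (hWlow i k))
        have harg : (dim (m + 1) : ℝ) * (R / 2 * B) ≤
            (W (m + 1)).mulVec (hiddenLayer dim σ W b x (m + 1)) i + b (m + 1) i := by
          have := hb (m + 1) (by omega) i
          linarith
        have hargnn : 0 ≤ (W (m + 1)).mulVec (hiddenLayer dim σ W b x (m + 1)) i + b (m + 1) i := by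
          have : 0 ≤ (dim (m + 1) : ℝ) * (R / 2 * B) := by positivity
          linarith
        show (∏ k ∈ Finset.range (m + 2), c k) * (R / 2) ^ (m + 2 - 1) *
            (∏ k ∈ Finset.Icc 1 (m + 2 - 1), (dim k : ℝ)) * (αt * t) ≤
            σ (m + 1) ((W (m + 1)).mulVec (hiddenLayer dim σ W b x (m + 1)) i + b (m + 1) i)
        have heq : (∏ k ∈ Finset.range (m + 2), c k) * (R / 2) ^ (m + 2 - 1) *
            (∏ k ∈ Finset.Icc 1 (m + 2 - 1), (dim k : ℝ)) * (αt * t) =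
            c (m + 1) * ((dim (m + 1) : ℝ) * (R / 2 * B)) := by
          rw [hBdef]
          rw [show m + 2 - 1 = m + 1 from rfl, show m + 1 - 1 = m from rfl,
            Finset.prod_range_succ, Finset.prod_Icc_succ_top (by omega : 1 ≤ m + 1), pow_succ]
          push_cast
          ring
        rw [heq]
        calc c (m + 1) * ((dim (m + 1) : ℝ) * (R / 2 * B))
            ≤ c (m + 1) * ((W (m + 1)).mulVec (hiddenLayer dim σ W b x (m + 1)) i + b (m + 1) i) :=
              mul_le_mul_of_nonneg_left harg (hc (m + 1)).le
          _ ≤ _ := hσ (m + 1) _ hargnn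
  -- final layer
  obtain ⟨m, rfl⟩ : ∃ m, L = m + 2 := ⟨L - 2, by omega⟩
  simp only [show m + 2 - 1 = m + 1 from rfl, show m + 2 - 2 = m from rfl] at *
  set B := (∏ k ∈ Finset.range (m + 1), c k) * (R / 2) ^ (m + 1 - 1) *
    (∏ k ∈ Finset.Icc 1 (m + 1 - 1), (dim k : ℝ)) * (αt * t) with hBdef
  have hB0 : 0 ≤ B := by
    refine mul_nonneg (mul_nonneg (mul_nonneg ?_ ?_) ?_) hαtt
    · exact Finset.prod_nonneg fun k _ => (hc k).le
    · positivity
    · exact Finset.prod_nonneg fun k _ => by positivity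
  have ihB := key (m + 1) (by omega) (by omega)
  have hWlow : ∀ i' j', A - R / 2 ≤ W (m + 1) i' j' := by
    intro i' j'
    have h1 := hWt (m + 1) (by omega) i' j'
    have h2 : A ≤ W0 (m + 1) i' j' := hW0last i' j'
    linarith
  have hARnn : 0 ≤ A - R / 2 := by linarith
  have hsum : (dim (m + 1) : ℝ) * ((A - R / 2) * B) ≤
      (W (m + 1)).mulVec (hiddenLayer dim σ W b x (m + 1)) j := by
    rw [Matrix.mulVec, dotProduct]
    calc (dim (m + 1) : ℝ) * ((A - R / 2) * B)
        = ∑ _k : Fin (dim (m + 1)), (A - R / 2) * B := by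
          rw [Finset.sum_const, Finset.card_univ, Fintype.card_fin, nsmul_eq_mul]
      _ ≤ ∑ k, W (m + 1) j k * hiddenLayer dim σ W b x (m + 1) k :=
          Finset.sum_le_sum fun k _ =>
            mul_le_mul (hWlow j k) (ihB k) hB0 (le_trans hARnn (hWlow j k))
  have hbj := hb (m + 1) (by omega) j
  have heq : (A - R / 2) * (R / 2) ^ m * (∏ l ∈ Finset.range (m + 1), c l) *
      (∏ l ∈ Finset.Icc 1 (m + 1), (dim l : ℝ)) * αt * t =
      (dim (m + 1) : ℝ) * ((A - R / 2) * B) := by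
    rw [hBdef, show m + 1 - 1 = m from rfl,
      Finset.prod_Icc_succ_top (by omega : 1 ≤ m + 1)]
    push_cast
    ring
  show _ ≤ (W (m + 1)).mulVec (hiddenLayer dim σ W b x (m + 1)) j + b (m + 1) j
  rw [heq]
  linarith
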